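/- Let (λ,μ) ∈ J_{m,ℓ}. If w ∈ Ẇ and i ∈ [0,n-1] satisfy that wT_0 is a standard tableau and l(w) > l(s_i w), then s_i w T_0 is also a standard tableau. -/

import Mathlib

/-- The periodic skew diagram `λ/μ^` attached to `(λ,μ)` (rows are indexed
`1,…,m`, with the `0`-indexed data `lam i = λ_{i+1}`, `mu i = μ_{i+1}`):
`λ/μ^ = ⋃_{k∈ℤ} (λ/μ + k(m,-ℓ))`. -/
def hatD (m ℓ : ℕ) (lam mu : ℕ → ℤ) : Set (ℤ × ℤ) :=
  {p | ∃ (k : ℤ) (i : ℕ), i < m ∧ p.1 = (i : ℤ) + 1 + k * m ∧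
        mu i + 1 ≤ p.2 + k * ℓ ∧ p.2 + k * ℓ ≤ lam i}

/-- `v ∈ P̂⁺_{m,ℓ}`: weakly decreasing with spread at most `ℓ`. -/
def isDom (m ℓ : ℕ) (v : ℕ → ℤ) : Prop :=
  (∀ i j : ℕ, i ≤ j → j < m → v j ≤ v i) ∧ v 0 - v (m - 1) ≤ (ℓ : ℤ)

/-- `(λ,μ) ∈ 𝒥_{m,ℓ}`. -/
def memJ (n m ℓ : ℕ) (lam mu : ℕ → ℤ) : Prop :=
  1 ≤ m ∧ isDom m ℓ lam ∧ isDom m ℓ mu ∧ (∀ i < m, mu i ≤ lam i) ∧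
    (∑ i ∈ Finset.range m, (lam i - mu i)) = (n : ℤ)

/-- `(λ,μ) ∈ 𝒥*_{m,ℓ}` (no empty rows: `λ_i > μ_i`). -/
def memJstar (n m ℓ : ℕ) (lam mu : ℕ → ℤ) : Prop :=
  1 ≤ m ∧ isDom m ℓ lam ∧ isDom m ℓ mu ∧ (∀ i < m, mu i < lam i) ∧
    (∑ i ∈ Finset.range m, (lam i - mu i)) = (n : ℤ)

/-- A tableau on the (`(m,-ℓ)`-periodic) diagram `Λ`: a bijection `Λ → ℤ`
with `T(u + (m,-ℓ)) = T(u) + n`. -/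
def IsTab (n m ℓ : ℕ) (Λ : Set (ℤ × ℤ)) (T : ℤ × ℤ → ℤ) : Prop :=
  Set.BijOn T Λ Set.univ ∧ ∀ u ∈ Λ, T (u + ((m : ℤ), -(ℓ : ℤ))) = T u + (n : ℤ)

/-- Row increasing. -/
def RowInc (Λ : Set (ℤ × ℤ)) (T : ℤ × ℤ → ℤ) : Prop :=
  ∀ a b : ℤ, (a, b) ∈ Λ → (a, b + 1) ∈ Λ → T (a, b) < T (a, b + 1)

/-- Column increasing. -/
def ColInc (Λ : Set (ℤ × ℤ)) (T : ℤ × ℤ → ℤ) : Prop :=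
  ∀ a b : ℤ, (a, b) ∈ Λ → (a + 1, b) ∈ Λ → T (a, b) < T (a + 1, b)

/-- A standard (row-column increasing) tableau. -/
def IsStdTab (n m ℓ : ℕ) (Λ : Set (ℤ × ℤ)) (T : ℤ × ℤ → ℤ) : Prop :=
  IsTab n m ℓ Λ T ∧ RowInc Λ T ∧ ColInc Λ T

/-- `F` is the content function of the tableau `T`: `F(T(a,b)) = b - a`. -/
def IsContent (Λ : Set (ℤ × ℤ)) (T : ℤ × ℤ → ℤ) (F : ℤ → ℤ) : Prop :=
  ∀ u ∈ Λ, F (T u) = u.2 - u.1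

/-- Partial sums `n_t = Σ_{s ≤ t} (λ_s - μ_s)` (`0`-indexed: `ps t = n_t`). -/
def ps (lam mu : ℕ → ℤ) (t : ℕ) : ℤ := ∑ s ∈ Finset.range t, (lam s - mu s)

/-- `T₀` is the row reading tableau on `λ/μ^`:
`T₀(i, μ_i + j) = Σ_{k<i}(λ_k - μ_k) + j`. -/
def IsRowReading (n m ℓ : ℕ) (lam mu : ℕ → ℤ) (T0 : ℤ × ℤ → ℤ) : Prop :=
  IsTab n m ℓ (hatD m ℓ lam mu) T0 ∧
  ∀ i : ℕ, i < m → ∀ j : ℤ, 1 ≤ j → j ≤ lam i - mu i →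
    T0 ((i : ℤ) + 1, mu i + j) = ps lam mu i + j

/-- The simple reflection `s_i` acting on `ℤ`. -/
def sFun (n : ℕ) (i : ℤ) : ℤ → ℤ := fun j =>
  if (j - i) % (n : ℤ) = 0 then j + 1
  else if (j - i - 1) % (n : ℤ) = 0 then j - 1
  else j

/-- The length of `w` in the extended affine Weyl group, realized as the number
of inversions `{(i,j) : 1 ≤ i ≤ n, i < j, w(i) > w(j)}`. -/
noncomputable def len (n : ℕ) (w : ℤ → ℤ) : ℕ :=
  Set.ncard {p : ℤ × ℤ | 1 ≤ p.1 ∧ p.1 ≤ (n : ℤ) ∧ p.1 < p.2 ∧ w p.2 < w p.1}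

lemma sFun_eq_add_one {n : ℕ} {i a : ℤ} (h : (n:ℤ) ∣ (a - i)) : sFun n i a = a + 1 := by
  simp only [sFun]
  rw [if_pos (Int.emod_eq_zero_of_dvd h)]

lemma not_dvd_of_dvd_pred {n : ℕ} (hn : 2 ≤ n) {i a : ℤ} (h : (n:ℤ) ∣ (a - i - 1)) :
    ¬ (n:ℤ) ∣ (a - i) := by
  intro h'
  have hd := dvd_sub h' h
  have he : (a - i) - (a - i - 1) = 1 := by ring
  rw [he] at hd
  have := Int.le_of_dvd one_pos hd
  omega

lemma sFun_eq_sub_one {n : ℕ} (hn : 2 ≤ n) {i a : ℤ} (h : (n:ℤ) ∣ (a - i - 1)) :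
    sFun n i a = a - 1 := by
  simp only [sFun]
  rw [if_neg, if_pos (Int.emod_eq_zero_of_dvd h)]
  intro hc
  exact not_dvd_of_dvd_pred hn h (Int.dvd_of_emod_eq_zero hc)

lemma sFun_eq_self {n : ℕ} {i a : ℤ} (h1 : ¬ (n:ℤ) ∣ (a - i)) (h2 : ¬ (n:ℤ) ∣ (a - i - 1)) :
    sFun n i a = a := by
  simp only [sFun]
  rw [if_neg (fun hc => h1 (Int.dvd_of_emod_eq_zero hc)),
      if_neg (fun hc => h2 (Int.dvd_of_emod_eq_zero hc))]

lemma sFun_lt {n : ℕ} (hn : 2 ≤ n) (i a b : ℤ) (hab : a < b)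
    (hx : ¬((n:ℤ) ∣ (a - i) ∧ b = a + 1)) : sFun n i a < sFun n i b := by
  have hgap : ∀ x y : ℤ, (n:ℤ) ∣ x → (n:ℤ) ∣ y → x < y → x + 2 ≤ y := by
    intro x y h1 h2 hlt
    have hd := dvd_sub h2 h1
    have := Int.le_of_dvd (by omega) hd
    omega
  by_cases ha1 : (n:ℤ) ∣ (a - i)
  · rw [sFun_eq_add_one ha1]
    have hb1 : ¬ b = a + 1 := fun hb => hx ⟨ha1, hb⟩
    by_cases hb2 : (n:ℤ) ∣ (b - i)
    · rw [sFun_eq_add_one hb2]; omega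
    · by_cases hb3 : (n:ℤ) ∣ (b - i - 1)
      · rw [sFun_eq_sub_one hn hb3]
        have := hgap (a - i) (b - i - 1) ha1 hb3 (by omega)
        omega
      · rw [sFun_eq_self hb2 hb3]
        -- b ≠ a + 1 since otherwise b - i - 1 = a - i divisible
        have : b ≠ a + 1 := by
          intro hb
          exact hb3 (by rw [hb]; convert ha1 using 1; ring)
        omega
  · by_cases ha2 : (n:ℤ) ∣ (a - i - 1)
    · rw [sFun_eq_sub_one hn ha2]
      by_cases hb2 : (n:ℤ) ∣ (b - i)
      · rw [sFun_eq_add_one hb2]; omega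
      · by_cases hb3 : (n:ℤ) ∣ (b - i - 1)
        · rw [sFun_eq_sub_one hn hb3]; omega
        · rw [sFun_eq_self hb2 hb3]; omega
    · rw [sFun_eq_self ha1 ha2]
      by_cases hb2 : (n:ℤ) ∣ (b - i)
      · rw [sFun_eq_add_one hb2]; omega
      · by_cases hb3 : (n:ℤ) ∣ (b - i - 1)
        · rw [sFun_eq_sub_one hn hb3]
          have : b - 1 ≠ a := by
            intro hb
            exact ha1 (by rw [← hb]; convert hb3 using 1; ring)
          omega
        · rw [sFun_eq_self hb2 hb3]; omega

lemma sFun_invol {n : ℕ} (hn : 2 ≤ n) (i : ℤ) : Function.Involutive (sFun n i) := by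
  intro a
  by_cases h1 : (n:ℤ) ∣ (a - i)
  · rw [sFun_eq_add_one h1]
    have h2 : (n:ℤ) ∣ (a + 1 - i - 1) := by convert h1 using 1; ring
    rw [sFun_eq_sub_one hn h2]; ring
  · by_cases h2 : (n:ℤ) ∣ (a - i - 1)
    · rw [sFun_eq_sub_one hn h2]
      have h3 : (n:ℤ) ∣ (a - 1 - i) := by convert h2 using 1; ring
      rw [sFun_eq_add_one h3]; ring
    · rw [sFun_eq_self h1 h2, sFun_eq_self h1 h2]

lemma sFun_per {n : ℕ} (hn : 2 ≤ n) (i a : ℤ) : sFun n i (a + n) = sFun n i a + n := by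
  have key : ∀ x : ℤ, ((n:ℤ) ∣ x + n) ↔ ((n:ℤ) ∣ x) := by
    intro x
    constructor
    · intro h
      have := dvd_sub h (dvd_refl (n:ℤ))
      simpa using this
    · intro h
      exact dvd_add h (dvd_refl _)
  by_cases h1 : (n:ℤ) ∣ (a - i)
  · rw [sFun_eq_add_one h1, sFun_eq_add_one (by rw [show a + (n:ℤ) - i = (a - i) + n by ring, key]; exact h1)]
    ring
  · by_cases h2 : (n:ℤ) ∣ (a - i - 1)
    · rw [sFun_eq_sub_one hn h2,
        sFun_eq_sub_one hn (by rw [show a + (n:ℤ) - i - 1 = (a - i - 1) + n by ring, key]; exact h2)]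
      ring
    · rw [sFun_eq_self h1 h2,
        sFun_eq_self (by rw [show a + (n:ℤ) - i = (a - i) + n by ring, key]; exact h1)
          (by rw [show a + (n:ℤ) - i - 1 = (a - i - 1) + n by ring, key]; exact h2)]

lemma w_shift {n : ℕ} {w : ℤ → ℤ} (hwp : ∀ j : ℤ, w (j + (n : ℤ)) = w j + (n : ℤ))
    (x k : ℤ) : w (x + k * n) = w x + k * n := by
  induction k using Int.induction_on with
  | zero => simp
  | succ k ih =>
      have h := hwp (x + (k:ℤ) * n)
      rw [show x + ((k:ℤ) + 1) * n = x + (k:ℤ) * n + n by ring, h, ih]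
      ring
  | pred k ih =>
      have h := hwp (x + (-(k:ℤ) - 1) * n)
      rw [show x + (-(k:ℤ) - 1) * n + n = x + (-(k:ℤ)) * n by ring] at h
      rw [ih] at h
      linarith [show (-(k:ℤ) - 1) * (n:ℤ) = (-(k:ℤ)) * n - n from by ring]

lemma descent_key {n : ℕ} (hn : 2 ≤ n) {w : ℤ → ℤ} (hwb : Function.Bijective w)
    (hwp : ∀ j : ℤ, w (j + (n : ℤ)) = w j + (n : ℤ)) (i : ℤ)
    (hlen : len n (fun j => sFun n i (w j)) < len n w) :
    ∀ x y : ℤ, (n:ℤ) ∣ (w x - i) → w y = w x + 1 → y < x := by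
  by_contra hcon
  push_neg at hcon
  obtain ⟨x, y, hdvd, hy1, hxy⟩ := hcon
  have hn0 : (0:ℤ) < n := by exact_mod_cast (by omega : 0 < n)
  have hxy' : x < y := by
    rcases lt_or_eq_of_le hxy with h | h
    · exact h
    · exfalso; rw [h] at hy1; omega
  set q : ℤ := (x - 1) / (n:ℤ) with hq
  have hr1 : 0 ≤ (x - 1) % (n:ℤ) := Int.emod_nonneg _ (by omega)
  have hr2 : (x - 1) % (n:ℤ) < n := Int.emod_lt_of_pos _ hn0
  have hde := Int.mul_ediv_add_emod (x - 1) (n:ℤ)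
  set x0 : ℤ := x + (-q) * (n:ℤ) with hx0def
  set y0 : ℤ := y + (-q) * (n:ℤ) with hy0def
  have hx0 : x0 = 1 + (x - 1) % (n:ℤ) := by
    rw [hx0def]
    linarith [show (-q) * (n:ℤ) = -((n:ℤ) * q) from by ring]
  have hx0b1 : 1 ≤ x0 := by omega
  have hx0b2 : x0 ≤ n := by omega
  have hx0y0 : x0 < y0 := by rw [hx0def, hy0def]; omega
  have hwx0 : w x0 = w x + (-q) * n := w_shift hwp x (-q)
  have hwy0 : w y0 = w y + (-q) * n := w_shift hwp y (-q)
  have hdvd0 : (n:ℤ) ∣ (w x0 - i) := by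
    rw [show w x0 - i = (w x - i) + (-q) * n from by rw [hwx0]; ring]
    exact dvd_add hdvd (dvd_mul_left _ _)
  have hy0v : w y0 = w x0 + 1 := by rw [hwy0, hwx0, hy1]; ring
  -- translation: any "descent pattern" pair is a translate of (x0, y0)
  have htrans : ∀ p q' : ℤ, (n:ℤ) ∣ (w p - i) → w q' = w p + 1 →
      ∃ c : ℤ, p = x0 + c * n ∧ q' = y0 + c * n := by
    intro p q' hpd hq'
    have hd2 : (n:ℤ) ∣ (w p - w x0) := by
      have := dvd_sub hpd hdvd0
      rw [show (w p - i) - (w x0 - i) = w p - w x0 from by ring] at this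
      exact this
    obtain ⟨c, hc⟩ := hd2
    refine ⟨c, ?_, ?_⟩
    · apply hwb.injective
      rw [w_shift hwp x0 c]
      linarith [show (n:ℤ) * c = c * n from by ring]
    · apply hwb.injective
      rw [w_shift hwp y0 c, hq', hy0v]
      linarith [show (n:ℤ) * c = c * n from by ring]
  have huniq : ∀ p q' : ℤ, 1 ≤ p → p ≤ n → (n:ℤ) ∣ (w p - i) → w q' = w p + 1 →
      p = x0 ∧ q' = y0 := by
    intro p q' hp1 hpn hpd hq'
    obtain ⟨c, hc1, hc2⟩ := htrans p q' hpd hq'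
    have hc0 : c = 0 := by
      rcases lt_trichotomy c 0 with h | h | h
      · have h1 : c ≤ -1 := by omega
        have h2 : c * (n:ℤ) ≤ (-1) * n := mul_le_mul_of_nonneg_right h1 (by omega)
        exfalso; linarith
      · exact h
      · have h1 : (1:ℤ) ≤ c := by omega
        have h2 : 1 * (n:ℤ) ≤ c * n := mul_le_mul_of_nonneg_right h1 (by omega)
        exfalso; linarith
    exact ⟨by rw [hc1, hc0]; ring, by rw [hc2, hc0]; ring⟩
  -- the inversion sets differ by inserting (x0, y0)
  have hset : {p : ℤ × ℤ | 1 ≤ p.1 ∧ p.1 ≤ (n:ℤ) ∧ p.1 < p.2 ∧ sFun n i (w p.2) < sFun n i (w p.1)}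
      = insert (x0, y0) {p : ℤ × ℤ | 1 ≤ p.1 ∧ p.1 ≤ (n:ℤ) ∧ p.1 < p.2 ∧ w p.2 < w p.1} := by
    ext ⟨p, q'⟩
    simp only [Set.mem_setOf_eq, Set.mem_insert_iff, Prod.mk.injEq]
    constructor
    · rintro ⟨h1, h2, h3, h4⟩
      by_cases hord : w q' < w p
      · right; exact ⟨h1, h2, h3, hord⟩
      · have hne : w p ≠ w q' := fun he => (by omega : ¬ p = q') (hwb.injective he)
        have hlt : w p < w q' := lt_of_le_of_ne (not_lt.mp hord) hne
        by_cases hex : (n:ℤ) ∣ (w p - i) ∧ w q' = w p + 1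
        · left; exact huniq p q' h1 h2 hex.1 hex.2
        · exact absurd (sFun_lt hn i _ _ hlt hex) (by omega)
    · rintro (⟨hp, hq⟩ | ⟨h1, h2, h3, h4⟩)
      · subst hp; subst hq
        refine ⟨hx0b1, hx0b2, hx0y0, ?_⟩
        have e1 : sFun n i (w x0) = w x0 + 1 := sFun_eq_add_one hdvd0
        have e2 : sFun n i (w y0) = w y0 - 1 :=
          sFun_eq_sub_one hn (by rw [show w y0 - i - 1 = w x0 - i from by rw [hy0v]; ring]; exact hdvd0)
        omega
      · refine ⟨h1, h2, h3, ?_⟩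
        apply sFun_lt hn i _ _ h4
        rintro ⟨hd, he⟩
        obtain ⟨c, hcq, hcp⟩ := htrans q' p hd he
        -- then p = y0 + c n > x0 + c n = q', contradicting p < q'
        rw [hcq, hcp] at h3
        omega
  have hle : len n w ≤ len n (fun j => sFun n i (w j)) := by
    have h1 : len n (fun j => sFun n i (w j))
        = (insert (x0, y0) {p : ℤ × ℤ | 1 ≤ p.1 ∧ p.1 ≤ (n:ℤ) ∧ p.1 < p.2 ∧ w p.2 < w p.1}).ncard := by
      rw [len, ← hset]
    rw [h1]
    exact Set.ncard_le_ncard_insert _ _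
  omega

lemma mem_hatD {m ℓ : ℕ} {lam mu : ℕ → ℤ} (k : ℤ) (i : ℕ) (hi : i < m) (j : ℤ)
    (h1 : 1 ≤ j) (h2 : j ≤ lam i - mu i) :
    ((i:ℤ) + 1 + k * m, mu i + j - k * ℓ) ∈ hatD m ℓ lam mu :=
  ⟨k, i, hi, rfl, by simp only; constructor <;> linarith⟩

lemma T0_formula {n m ℓ : ℕ} {lam mu : ℕ → ℤ} {T0 : ℤ × ℤ → ℤ}
    (hT0 : IsRowReading n m ℓ lam mu T0) (k : ℤ) :
    ∀ i : ℕ, i < m → ∀ j : ℤ, 1 ≤ j → j ≤ lam i - mu i →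
      T0 ((i:ℤ) + 1 + k * m, mu i + j - k * ℓ) = ps lam mu i + j + k * n := by
  induction k using Int.induction_on with
  | zero => intro i hi j h1 h2; simpa using hT0.2 i hi j h1 h2
  | succ k ih =>
      intro i hi j h1 h2
      have hmem := mem_hatD (lam := lam) (mu := mu) (m := m) (ℓ := ℓ) (k:ℤ) i hi j h1 h2
      have hstep := hT0.1.2 _ hmem
      have e : ((i:ℤ) + 1 + (k:ℤ) * m, mu i + j - (k:ℤ) * ℓ) + ((m:ℤ), -(ℓ:ℤ))
          = ((i:ℤ) + 1 + ((k:ℤ) + 1) * m, mu i + j - ((k:ℤ) + 1) * ℓ) := by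
        simp only [Prod.mk_add_mk, Prod.mk.injEq]
        constructor <;> ring
      rw [e] at hstep
      rw [hstep, ih i hi j h1 h2]
      ring
  | pred k ih =>
      intro i hi j h1 h2
      have hmem := mem_hatD (lam := lam) (mu := mu) (m := m) (ℓ := ℓ) (-(k:ℤ) - 1) i hi j h1 h2
      have hstep := hT0.1.2 _ hmem
      have e : ((i:ℤ) + 1 + (-(k:ℤ) - 1) * m, mu i + j - (-(k:ℤ) - 1) * ℓ) + ((m:ℤ), -(ℓ:ℤ))
          = ((i:ℤ) + 1 + (-(k:ℤ)) * m, mu i + j - (-(k:ℤ)) * ℓ) := by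
        simp only [Prod.mk_add_mk, Prod.mk.injEq]
        constructor <;> ring
      rw [e, ih i hi j h1 h2] at hstep
      linarith [show (-(k:ℤ) - 1) * (n:ℤ) = (-(k:ℤ)) * n - n from by ring, hstep]

lemma T0_val {n m ℓ : ℕ} {lam mu : ℕ → ℤ} {T0 : ℤ × ℤ → ℤ}
    (hT0 : IsRowReading n m ℓ lam mu T0) (a b : ℤ) (k : ℤ) (i1 : ℕ) (hi : i1 < m)
    (ha : a = (i1:ℤ) + 1 + k * m) (hb1 : mu i1 + 1 ≤ b + k * ℓ) (hb2 : b + k * ℓ ≤ lam i1) :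
    T0 (a, b) = ps lam mu i1 + (b + k * ℓ - mu i1) + k * n := by
  rw [show ((a:ℤ), b) = ((i1:ℤ) + 1 + k * m, mu i1 + (b + k * (ℓ:ℤ) - mu i1) - k * ℓ) from by
    rw [ha]; congr 1; ring]
  exact T0_formula hT0 k i1 hi _ (by linarith) (by linarith)

lemma T0_row {n m ℓ : ℕ} {lam mu : ℕ → ℤ} {T0 : ℤ × ℤ → ℤ}
    (hJ : memJ n m ℓ lam mu) (hT0 : IsRowReading n m ℓ lam mu T0) (a b : ℤ)
    (h1 : (a, b) ∈ hatD m ℓ lam mu) (h2 : (a, b + 1) ∈ hatD m ℓ lam mu) :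
    T0 (a, b) < T0 (a, b + 1) := by
  obtain ⟨k, i1, hi1, ha, hb1, hb2⟩ := h1
  obtain ⟨k', i2, hi2, ha', hb1', hb2'⟩ := h2
  simp only at ha hb1 hb2 ha' hb1' hb2'
  have hm1 : (1:ℤ) ≤ m := by exact_mod_cast hJ.1
  have hi1' : (i1:ℤ) < m := by exact_mod_cast hi1
  have hi2' : (i2:ℤ) < m := by exact_mod_cast hi2
  have hi1n : (0:ℤ) ≤ i1 := Int.ofNat_nonneg i1
  have hi2n : (0:ℤ) ≤ i2 := Int.ofNat_nonneg i2
  have heq : (k' - k) * (m:ℤ) = (i1:ℤ) - i2 := by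
    have : (i2:ℤ) + 1 + k' * m = (i1:ℤ) + 1 + k * m := by rw [← ha', ← ha]
    linarith [show (k' - k) * (m:ℤ) = k' * m - k * m from by ring]
  have hk : k' = k ∧ (i2:ℤ) = i1 := by
    rcases lt_trichotomy (k' - k) 0 with h | h | h
    · exfalso
      have h1' : k' - k ≤ -1 := by omega
      have : (k' - k) * (m:ℤ) ≤ (-1) * m := mul_le_mul_of_nonneg_right h1' (by omega)
      linarith
    · have hk0 : k' = k := by omega
      refine ⟨hk0, by linarith [heq, show (k' - k) * (m:ℤ) = 0 from by rw [show k' - k = 0 from by omega]; ring]⟩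
    · exfalso
      have h1' : (1:ℤ) ≤ k' - k := by omega
      have : 1 * (m:ℤ) ≤ (k' - k) * m := mul_le_mul_of_nonneg_right h1' (by omega)
      linarith
  obtain ⟨hk0, hieq⟩ := hk
  have hi12 : i2 = i1 := by exact_mod_cast hieq
  rw [hi12, hk0] at hb1' hb2' ha'
  rw [T0_val hT0 a b k i1 hi1 ha hb1 hb2,
      T0_val hT0 a (b + 1) k i1 hi1 ha (by linarith) (by linarith)]
  linarith

lemma T0_col {n m ℓ : ℕ} {lam mu : ℕ → ℤ} {T0 : ℤ × ℤ → ℤ}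
    (hJ : memJ n m ℓ lam mu) (hT0 : IsRowReading n m ℓ lam mu T0) (a b : ℤ)
    (h1 : (a, b) ∈ hatD m ℓ lam mu) (h2 : (a + 1, b) ∈ hatD m ℓ lam mu) :
    T0 (a, b) < T0 (a + 1, b) := by
  obtain ⟨k, i1, hi1, ha, hb1, hb2⟩ := h1
  obtain ⟨k', i2, hi2, ha', hb1', hb2'⟩ := h2
  simp only at ha hb1 hb2 ha' hb1' hb2'
  have hm1 : (1:ℤ) ≤ m := by exact_mod_cast hJ.1
  have hi1' : (i1:ℤ) < m := by exact_mod_cast hi1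
  have hi2' : (i2:ℤ) < m := by exact_mod_cast hi2
  have hi1n : (0:ℤ) ≤ i1 := Int.ofNat_nonneg i1
  have hi2n : (0:ℤ) ≤ i2 := Int.ofNat_nonneg i2
  have heq : (k' - k) * (m:ℤ) = (i1:ℤ) + 1 - i2 := by
    have : (i2:ℤ) + 1 + k' * m = (i1:ℤ) + 1 + k * m + 1 := by rw [← ha', ← ha]
    linarith [show (k' - k) * (m:ℤ) = k' * m - k * m from by ring]
  rw [T0_val hT0 a b k i1 hi1 ha hb1 hb2,
      T0_val hT0 (a + 1) b k' i2 hi2 ha' hb1' hb2']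
  have hcase : (k' = k ∧ (i2:ℤ) = i1 + 1) ∨ (k' = k + 1 ∧ i1 = m - 1 ∧ i2 = 0) := by
    rcases lt_trichotomy (k' - k) 0 with h | h | h
    · exfalso
      have h1' : k' - k ≤ -1 := by omega
      have : (k' - k) * (m:ℤ) ≤ (-1) * m := mul_le_mul_of_nonneg_right h1' (by omega)
      linarith
    · left
      have hk0 : k' = k := by omega
      refine ⟨hk0, by linarith [heq, show (k' - k) * (m:ℤ) = 0 from by rw [show k' - k = 0 from by omega]; ring]⟩
    · rcases lt_trichotomy (k' - k) 1 with h2' | h2' | h2'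
      · omega
      · right
        have hm : (k' - k) * (m:ℤ) = m := by rw [h2']; ring
        have hii : (i1:ℤ) + 1 - i2 = m := by omega
        refine ⟨by omega, by omega, by omega⟩
      · exfalso
        have h1' : (2:ℤ) ≤ k' - k := by omega
        have : 2 * (m:ℤ) ≤ (k' - k) * m := mul_le_mul_of_nonneg_right h1' (by omega)
        linarith
  rcases hcase with ⟨hk0, hieq⟩ | ⟨hk0, hieq1, hieq2⟩
  · -- same period, next row
    have hi12 : i2 = i1 + 1 := by exact_mod_cast hieq
    rw [hi12, hk0] at hb1' hb2' ⊢
    have hps : ps lam mu (i1 + 1) = ps lam mu i1 + (lam i1 - mu i1) :=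
      Finset.sum_range_succ _ i1
    linarith
  · -- wrap-around: i1 = m-1, i2 = 0, k' = k+1
    rw [hieq1] at hb1 hb2 ⊢
    rw [hieq2, hk0] at hb1' hb2' ⊢
    have hpsm : ps lam mu m = (n:ℤ) := hJ.2.2.2.2
    have hmsucc : m = (m - 1) + 1 := by omega
    have hps : ps lam mu m = ps lam mu (m - 1) + (lam (m - 1) - mu (m - 1)) := by
      conv_lhs => rw [hmsucc]
      exact Finset.sum_range_succ _ (m - 1)
    have hps0 : ps lam mu 0 = 0 := Finset.sum_range_zero _
    have e1 : ((k:ℤ) + 1) * (ℓ:ℤ) = k * ℓ + ℓ := by ring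
    have e2 : ((k:ℤ) + 1) * (n:ℤ) = k * n + n := by ring
    linarith

/-- if `w T₀` is a standard tableau and `l(w) > l(s_i w)` for some
`i ∈ [0,n-1]`, then `s_i w T₀` is also a standard tableau. -/
theorem std_descent (n m ℓ : ℕ) (hn : 2 ≤ n) (lam mu : ℕ → ℤ)
    (hJ : memJ n m ℓ lam mu)
    (T0 : ℤ × ℤ → ℤ) (hT0 : IsRowReading n m ℓ lam mu T0)
    (w : ℤ → ℤ) (hwb : Function.Bijective w)
    (hwp : ∀ j : ℤ, w (j + (n : ℤ)) = w j + (n : ℤ))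
    (i : ℤ) (hi0 : 0 ≤ i) (hin : i < (n : ℤ))
    (hstd : IsStdTab n m ℓ (hatD m ℓ lam mu) (fun u => w (T0 u)))
    (hlen : len n (fun j => sFun n i (w j)) < len n w) :
    IsStdTab n m ℓ (hatD m ℓ lam mu) (fun u => sFun n i (w (T0 u))) := by
  obtain ⟨⟨hbij, hper⟩, hrow, hcol⟩ := hstd
  have key := descent_key hn hwb hwp i hlen
  have hsb : Function.Bijective (sFun n i) := (sFun_invol hn i).bijective
  refine ⟨⟨?_, ?_⟩, ?_, ?_⟩
  · -- bijectivity
    have hs : Set.BijOn (sFun n i) Set.univ Set.univ :=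
      ⟨fun _ _ => trivial, hsb.injective.injOn,
        fun y _ => ⟨(hsb.surjective y).choose, trivial, (hsb.surjective y).choose_spec⟩⟩
    exact hs.comp hbij
  · -- periodicity
    intro u hu
    have h1 := hper u hu
    simp only at h1 ⊢
    rw [h1, sFun_per hn]
  · -- row increasing
    intro a b h1 h2
    have hlt := hrow a b h1 h2
    simp only at hlt ⊢
    apply sFun_lt hn i _ _ hlt
    rintro ⟨hd, he⟩
    have hk := key (T0 (a, b)) (T0 (a, b + 1)) hd he
    have hr := T0_row hJ hT0 a b h1 h2
    omega
  · -- column increasing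
    intro a b h1 h2
    have hlt := hcol a b h1 h2
    simp only at hlt ⊢
    apply sFun_lt hn i _ _ hlt
    rintro ⟨hd, he⟩
    have hk := key (T0 (a, b)) (T0 (a + 1, b)) hd he
    have hc := T0_col hJ hT0 a b h1 h2
    omega
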